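/- Let (Ω, 𝓕, μ) be a probability space and T, k ∈ ℕ. For each t = 1, …, T let X_{t1}, …, X_{tk} and W_t be random variables with values in standard Borel spaces, let L_t : Ω → 𝓛 be a random variable with 𝓛 standard Borel, and let 𝓖_t := σ(X_{s j} : s ≤ t−1, 1 ≤ j ≤ k) ⊔ σ(L_1, …, L_t). Suppose for every t and every j = 1, …, k there exist: a measurable function f_{t j} : 𝓛 × [0,1] → 𝓧_{t j} with X_{t j} = f_{t j}(L_t, M_{t j}) almost surely, where M_{t j} := h_{t j}(σ_j, ω_{t j}) for a measurable h_{t j} : 𝓢_j × [0,1] → [0,1], random variables σ_j : Ω → 𝓢_j (into standard Borel spaces) that are almost surely constant, and random variables ω_{t j} : Ω → [0,1] such that the joint random variable (ω_{t1}, …, ω_{tk}) is conditionally independent of W̄_t := (W_1, …, W_t) given 𝓖_t. Then for every t = 1, …, T, the joint random variable (X_{t1}, …, X_{tk}) is conditionally independent of W̄_t given 𝓖_t. -/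

import Mathlib

open MeasureTheory

/-- `A` and `B` are conditionally independent given the sub-σ-algebra `G`:
for all measurable sets `E`, `F` in the respective codomains,
`P(A ∈ E ∧ B ∈ F | G) = P(A ∈ E | G) · P(B ∈ F | G)` almost surely. -/
def CondIndepRV {Ω α β : Type*} {mΩ : MeasurableSpace Ω} [MeasurableSpace α] [MeasurableSpace β]
    (μ : Measure Ω) (G : MeasurableSpace Ω) (A : Ω → α) (B : Ω → β) : Prop :=
  ∀ (E : Set α) (F : Set β), MeasurableSet E → MeasurableSet F →
    (μ[(A ⁻¹' E ∩ B ⁻¹' F).indicator (fun _ => (1 : ℝ)) | G]) =ᵐ[μ]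
      fun ω => (μ[(A ⁻¹' E).indicator (fun _ => (1 : ℝ)) | G]) ω *
        (μ[(B ⁻¹' F).indicator (fun _ => (1 : ℝ)) | G]) ω

section AuxLemmas

variable {Ω : Type*} {G mΩ : MeasurableSpace Ω} {μ : @Measure Ω mΩ} [IsProbabilityMeasure μ]

lemma myIntInd {S : Set Ω} (hS : MeasurableSet[mΩ] S) :
    Integrable (S.indicator (fun _ => (1 : ℝ))) μ :=
  (integrable_const 1).indicator hS

omit [IsProbabilityMeasure μ] in
lemma myCondexpNonneg {S : Set Ω} :
    0 ≤ᵐ[μ] μ[S.indicator (fun _ => (1 : ℝ)) | G] :=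
  condExp_nonneg (ae_of_all μ (fun ω => Set.indicator_nonneg (fun _ _ => zero_le_one) ω))

lemma myCondexpLeOne (hG : G ≤ mΩ) {S : Set Ω} (hS : MeasurableSet[mΩ] S) :
    μ[S.indicator (fun _ => (1 : ℝ)) | G] ≤ᵐ[μ] 1 := by
  have h1 : μ[(fun _ => (1 : ℝ)) | G] = fun _ => (1 : ℝ) := condExp_const hG 1
  have := condExp_mono (m := G) (μ := μ) (myIntInd hS) (integrable_const (1 : ℝ))
    (ae_of_all μ (fun ω => Set.indicator_le_self' (fun _ _ => zero_le_one) ω))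
  calc μ[S.indicator (fun _ => (1 : ℝ)) | G] ≤ᵐ[μ] μ[(fun _ => (1 : ℝ)) | G] := this
    _ = fun _ => (1 : ℝ) := h1

lemma myCondexpBdd (hG : G ≤ mΩ) {S : Set Ω} (hS : MeasurableSet[mΩ] S) :
    ∀ᵐ ω ∂μ, ‖(μ[S.indicator (fun _ => (1 : ℝ)) | G]) ω‖ ≤ 1 := by
  filter_upwards [myCondexpNonneg (μ := μ) (G := G) (S := S), myCondexpLeOne hG hS] with ω h0 h1
  rw [Real.norm_eq_abs, abs_of_nonneg h0]
  exact h1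

/-- Pull-out property: for `s` `G`-measurable,
`∫_s E[1_V|G] ⬝ E[1_U|G] dμ = ∫_{s ∩ V} E[1_U|G] dμ`. -/
lemma myPullout (hG : G ≤ mΩ) {V U : Set Ω} (hV : MeasurableSet[mΩ] V)
    (hU : MeasurableSet[mΩ] U) {s : Set Ω} (hs : MeasurableSet[G] s) :
    ∫ ω in s, (μ[V.indicator (fun _ => (1 : ℝ)) | G]) ω *
        (μ[U.indicator (fun _ => (1 : ℝ)) | G]) ω ∂μ
      = ∫ ω in s ∩ V, (μ[U.indicator (fun _ => (1 : ℝ)) | G]) ω ∂μ := by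
  set g := μ[U.indicator (fun _ => (1 : ℝ)) | G] with hgdef
  have hgint : Integrable g μ := integrable_condExp
  have hprodint : Integrable (g * V.indicator (fun _ => (1 : ℝ))) μ :=
    (myIntInd hV).bdd_mul hgint.aestronglyMeasurable (myCondexpBdd hG hU)
  have hmul : μ[g * V.indicator (fun _ => (1 : ℝ)) | G]
      =ᵐ[μ] g * μ[V.indicator (fun _ => (1 : ℝ)) | G] :=
    condExp_mul_of_stronglyMeasurable_left stronglyMeasurable_condExp hprodint (myIntInd hV)
  have h1 : ∫ ω in s, (μ[V.indicator (fun _ => (1 : ℝ)) | G]) ω * g ω ∂μ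
      = ∫ ω in s, (μ[g * V.indicator (fun _ => (1 : ℝ)) | G]) ω ∂μ := by
    refine integral_congr_ae ?_
    filter_upwards [ae_restrict_of_ae hmul] with ω hω
    rw [hω]
    simp [mul_comm]
  rw [h1, setIntegral_condExp hG hprodint hs]
  have h2 : ∀ ω, (g * V.indicator (fun _ => (1 : ℝ))) ω = V.indicator g ω := by
    intro ω
    by_cases hω : ω ∈ V <;> simp [hω]
  rw [integral_congr_ae (ae_of_all _ h2 |> ae_restrict_of_ae)]
  exact setIntegral_indicator hV

end AuxLemmas

/-- Adjoining a `G`-measurable random variable to the left component preserves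
conditional independence given `G`. -/
lemma myProdLeft {Ω α β γ : Type*} [MeasurableSpace α] [MeasurableSpace β] [MeasurableSpace γ]
    {G mΩ : MeasurableSpace Ω} {μ : @Measure Ω mΩ} [IsProbabilityMeasure μ] (hG : G ≤ mΩ)
    {A : Ω → α} (hA : Measurable A) {B : Ω → β} (hB : Measurable B)
    {ξ : Ω → γ} (hξ : Measurable[G] ξ)
    (h : CondIndepRV μ G A B) :
    CondIndepRV μ G (fun ω => (ξ ω, A ω)) B := by
  have hξ' : Measurable ξ := hξ.mono hG le_rfl
  have hP : Measurable (fun ω => (ξ ω, A ω)) := hξ'.prodMk hA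
  intro E F hE hF
  set P : Ω → γ × α := fun ω => (ξ ω, A ω) with hPdef
  set g := μ[(B ⁻¹' F).indicator (fun _ => (1 : ℝ)) | G] with hgdef
  have hg0 : 0 ≤ᵐ[μ] g := myCondexpNonneg
  have hg1 : g ≤ᵐ[μ] 1 := myCondexpLeOne hG (hB hF)
  have hgm : Measurable g := (stronglyMeasurable_condExp.mono hG).measurable
  set gE : Ω → ENNReal := fun ω => ENNReal.ofReal (g ω) with hgEdef
  have hgEm : Measurable gE := hgm.ennreal_ofReal
  have hfin : IsFiniteMeasure (μ.withDensity gE) := by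
    constructor
    rw [withDensity_apply _ MeasurableSet.univ, setLIntegral_univ]
    calc ∫⁻ ω, gE ω ∂μ ≤ ∫⁻ _, 1 ∂μ := by
          refine lintegral_mono_ae ?_
          filter_upwards [hg1] with ω hω
          exact ENNReal.ofReal_le_one.mpr hω
      _ = 1 := by simp
      _ < ⊤ := ENNReal.one_lt_top
  have hconv : ∀ u : Set Ω, MeasurableSet[mΩ] u →
      (μ.withDensity gE) u = ENNReal.ofReal (∫ ω in u, g ω ∂μ) := by
    intro u hu
    rw [withDensity_apply _ hu]
    exact (ofReal_integral_eq_lintegral_ofReal integrable_condExp.integrableOn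
      (ae_restrict_of_ae hg0)).symm
  -- key computation on "G-rectangles"
  have hrect : ∀ s : Set Ω, MeasurableSet[G] s → ∀ D : Set α, MeasurableSet D →
      μ ((s ∩ A ⁻¹' D) ∩ B ⁻¹' F) = (μ.withDensity gE) (s ∩ A ⁻¹' D) := by
    intro s hs D hD
    have hsΩ : MeasurableSet[mΩ] s := hG s hs
    have hu : MeasurableSet[mΩ] (s ∩ A ⁻¹' D) := hsΩ.inter (hA hD)
    have hWm : MeasurableSet[mΩ] (A ⁻¹' D ∩ B ⁻¹' F) := (hA hD).inter (hB hF)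
    have r1 : ∫ ω in s, (A ⁻¹' D ∩ B ⁻¹' F).indicator (fun _ => (1 : ℝ)) ω ∂μ
        = (μ ((s ∩ A ⁻¹' D) ∩ B ⁻¹' F)).toReal := by
      rw [setIntegral_indicator hWm, setIntegral_const, smul_eq_mul, mul_one, Set.inter_assoc, measureReal_def]
    have r2 : ∫ ω in s, (μ[(A ⁻¹' D ∩ B ⁻¹' F).indicator (fun _ => (1 : ℝ)) | G]) ω ∂μ
        = ∫ ω in s, (A ⁻¹' D ∩ B ⁻¹' F).indicator (fun _ => (1 : ℝ)) ω ∂μ :=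
      setIntegral_condExp hG (myIntInd hWm) hs
    have r3 : ∫ ω in s, (μ[(A ⁻¹' D ∩ B ⁻¹' F).indicator (fun _ => (1 : ℝ)) | G]) ω ∂μ
        = ∫ ω in s, (μ[(A ⁻¹' D).indicator (fun _ => (1 : ℝ)) | G]) ω * g ω ∂μ :=
      integral_congr_ae (ae_restrict_of_ae (h D F hD hF))
    have r4 := myPullout (μ := μ) hG (hA hD) (hB hF) hs
    have rr : (μ ((s ∩ A ⁻¹' D) ∩ B ⁻¹' F)).toReal = ∫ ω in s ∩ A ⁻¹' D, g ω ∂μ := by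
      rw [← r1, ← r2, r3, r4]
    calc μ ((s ∩ A ⁻¹' D) ∩ B ⁻¹' F)
        = ENNReal.ofReal ((μ ((s ∩ A ⁻¹' D) ∩ B ⁻¹' F)).toReal) :=
          (ENNReal.ofReal_toReal (measure_ne_top _ _)).symm
      _ = ENNReal.ofReal (∫ ω in s ∩ A ⁻¹' D, g ω ∂μ) := by rw [rr]
      _ = (μ.withDensity gE) (s ∩ A ⁻¹' D) := (hconv _ hu).symm
  -- extend from rectangles to all sets in the product σ-algebra
  have hmeasext : ∀ s : Set Ω, MeasurableSet[G] s →
      Measure.map P (μ.restrict (s ∩ B ⁻¹' F))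
        = Measure.map P ((μ.withDensity gE).restrict s) := by
    intro s hs
    have hsΩ : MeasurableSet[mΩ] s := hG s hs
    haveI := hfin
    haveI : IsFiniteMeasure (Measure.map P (μ.restrict (s ∩ B ⁻¹' F))) :=
      Measure.isFiniteMeasure_map _ _
    refine ext_of_generate_finite _ generateFrom_prod.symm isPiSystem_prod ?_ ?_
    · rintro u ⟨D₁, hD₁, D₂, hD₂, rfl⟩
      rw [Measure.map_apply hP (hD₁.prod hD₂), Measure.map_apply hP (hD₁.prod hD₂)]
      have hpre : P ⁻¹' (D₁ ×ˢ D₂) = ξ ⁻¹' D₁ ∩ A ⁻¹' D₂ := by ext ω; simp [P]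
      rw [hpre, Measure.restrict_apply ((hξ' hD₁).inter (hA hD₂)),
        Measure.restrict_apply ((hξ' hD₁).inter (hA hD₂))]
      have e1 : ξ ⁻¹' D₁ ∩ A ⁻¹' D₂ ∩ (s ∩ B ⁻¹' F)
          = ((s ∩ ξ ⁻¹' D₁) ∩ A ⁻¹' D₂) ∩ B ⁻¹' F := by
        ext ω; simp only [Set.mem_inter_iff, Set.mem_preimage]; tauto
      have e2 : ξ ⁻¹' D₁ ∩ A ⁻¹' D₂ ∩ s = (s ∩ ξ ⁻¹' D₁) ∩ A ⁻¹' D₂ := by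
        ext ω; simp only [Set.mem_inter_iff, Set.mem_preimage]; tauto
      rw [e1, e2]
      exact hrect _ (hs.inter (hξ hD₁)) D₂ hD₂
    · rw [Measure.map_apply hP MeasurableSet.univ, Measure.map_apply hP MeasurableSet.univ,
        Set.preimage_univ, Measure.restrict_apply MeasurableSet.univ,
        Measure.restrict_apply MeasurableSet.univ, Set.univ_inter, Set.univ_inter]
      have := hrect s hs Set.univ MeasurableSet.univ
      simpa using this
  -- conclude via uniqueness of conditional expectation
  have hPE : MeasurableSet[mΩ] (P ⁻¹' E) := hP hE
  have goal' : (fun ω => (μ[(P ⁻¹' E).indicator (fun _ => (1 : ℝ)) | G]) ω * g ω)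
      =ᵐ[μ] μ[(P ⁻¹' E ∩ B ⁻¹' F).indicator (fun _ => (1 : ℝ)) | G] := by
    refine ae_eq_condExp_of_forall_setIntegral_eq hG (myIntInd (hPE.inter (hB hF))) ?_ ?_ ?_
    · intro s hs hμs
      exact (integrable_condExp.bdd_mul
        (stronglyMeasurable_condExp.mono hG).aestronglyMeasurable
        (myCondexpBdd hG hPE)).integrableOn
    · intro s hs hμs
      have l1 : ∫ ω in s, (μ[(P ⁻¹' E).indicator (fun _ => (1 : ℝ)) | G]) ω * g ω ∂μ
          = ∫ ω in s ∩ P ⁻¹' E, g ω ∂μ := myPullout hG hPE (hB hF) hs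
      have l2 := congrArg (fun ν : Measure (γ × α) => ν E) (hmeasext s hs)
      beta_reduce at l2
      rw [Measure.map_apply hP hE, Measure.map_apply hP hE, Measure.restrict_apply hPE,
        Measure.restrict_apply hPE, hconv _ (hPE.inter (hG s hs))] at l2
      have l3 : (μ (P ⁻¹' E ∩ (s ∩ B ⁻¹' F))).toReal = ∫ ω in P ⁻¹' E ∩ s, g ω ∂μ := by
        rw [l2, ENNReal.toReal_ofReal (integral_nonneg_of_ae (ae_restrict_of_ae hg0))]
      have l4 : ∫ ω in s, ((P ⁻¹' E ∩ B ⁻¹' F)).indicator (fun _ => (1 : ℝ)) ω ∂μ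
          = (μ (s ∩ (P ⁻¹' E ∩ B ⁻¹' F))).toReal := by
        rw [setIntegral_indicator (hPE.inter (hB hF)), setIntegral_const, smul_eq_mul, mul_one, measureReal_def]
      have e3 : s ∩ (P ⁻¹' E ∩ B ⁻¹' F) = P ⁻¹' E ∩ (s ∩ B ⁻¹' F) := by
        ext ω; simp only [Set.mem_inter_iff, Set.mem_preimage]; tauto
      have e4 : s ∩ P ⁻¹' E = P ⁻¹' E ∩ s := Set.inter_comm _ _
      rw [l1, e4, ← l3, ← e3, ← l4]
    · exact (stronglyMeasurable_condExp.mul stronglyMeasurable_condExp).aestronglyMeasurable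
  exact goal'.symm
lemma myCompLeft {Ω α α' β : Type*} [MeasurableSpace α] [MeasurableSpace α'] [MeasurableSpace β]
    {mΩ : MeasurableSpace Ω} {μ : Measure Ω} {G : MeasurableSpace Ω}
    {A : Ω → α} {B : Ω → β} (h : CondIndepRV μ G A B) {Φ : α → α'} (hΦ : Measurable Φ) :
    CondIndepRV μ G (fun ω => Φ (A ω)) B :=
  fun E F hE hF => h (Φ ⁻¹' E) F (hΦ hE) hF

lemma myIndAe {Ω : Type*} {S S' : Set Ω} {ω : Ω} (hmem : ω ∈ S' ↔ ω ∈ S) :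
    S'.indicator (fun _ => (1 : ℝ)) ω = S.indicator (fun _ => (1 : ℝ)) ω := by
  by_cases h1 : ω ∈ S
  · rw [Set.indicator_of_mem (hmem.mpr h1), Set.indicator_of_mem h1]
  · rw [Set.indicator_of_notMem (fun hc => h1 (hmem.mp hc)), Set.indicator_of_notMem h1]

lemma myCongr {Ω α β : Type*} [MeasurableSpace α] [MeasurableSpace β]
    {mΩ : MeasurableSpace Ω} {μ : Measure Ω} {G : MeasurableSpace Ω}
    {A A' : Ω → α} {B : Ω → β} (hAA' : A =ᵐ[μ] A') (h : CondIndepRV μ G A B) :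
    CondIndepRV μ G A' B := by
  intro E F hE hF
  have hind1 : (A' ⁻¹' E ∩ B ⁻¹' F).indicator (fun _ => (1 : ℝ))
      =ᵐ[μ] (A ⁻¹' E ∩ B ⁻¹' F).indicator (fun _ => (1 : ℝ)) := by
    filter_upwards [hAA'] with ω hω
    exact myIndAe (by simp [hω])
  have hind2 : (A' ⁻¹' E).indicator (fun _ => (1 : ℝ))
      =ᵐ[μ] (A ⁻¹' E).indicator (fun _ => (1 : ℝ)) := by
    filter_upwards [hAA'] with ω hω
    exact myIndAe (by simp [hω])
  calc μ[(A' ⁻¹' E ∩ B ⁻¹' F).indicator (fun _ => (1 : ℝ)) | G]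
      =ᵐ[μ] μ[(A ⁻¹' E ∩ B ⁻¹' F).indicator (fun _ => (1 : ℝ)) | G] := condExp_congr_ae hind1
    _ =ᵐ[μ] fun ω => (μ[(A ⁻¹' E).indicator (fun _ => (1 : ℝ)) | G]) ω *
        (μ[(B ⁻¹' F).indicator (fun _ => (1 : ℝ)) | G]) ω := h E F hE hF
    _ =ᵐ[μ] fun ω => (μ[(A' ⁻¹' E).indicator (fun _ => (1 : ℝ)) | G]) ω *
        (μ[(B ⁻¹' F).indicator (fun _ => (1 : ℝ)) | G]) ω := by
        filter_upwards [condExp_congr_ae (m := G) hind2] with ω hω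
        rw [hω]

/-- Theorem 1 of the paper (rigorous content, combining Lemmas 1 and 2): if the covariate
process admits the factor-model (sequential Kallenberg) representation
`X_{tj} = f_{tj}(L_t, M_{tj})` a.s. with noise `M_{tj} := h_{tj}(σ_j, ω_{tj})`, where the
parameters `σ_j` are almost surely constant and the uniform noises `(ω_{t1}, …, ω_{tk})`
are conditionally independent of the treatment history `W̄_t = (W_1, …, W_t)` given
`𝓖_t = σ(X_{sj} : s ≤ t−1, j) ⊔ σ(L_1, …, L_t)`, then at every time-step `t` the joint
random variable `(X_{t1}, …, X_{tk})` is conditionally independent of `W̄_t` given `𝓖_t`. -/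
theorem stmt6 {Ω 𝓛 : Type*} [mΩ : MeasurableSpace Ω]
    [MeasurableSpace 𝓛] [StandardBorelSpace 𝓛]
    (μ : Measure Ω) [IsProbabilityMeasure μ]
    (T k : ℕ)
    (𝓧 : Fin T → Fin k → Type*)
    [∀ t j, MeasurableSpace (𝓧 t j)] [∀ t j, StandardBorelSpace (𝓧 t j)]
    (𝓦 : Fin T → Type*) [∀ t, MeasurableSpace (𝓦 t)] [∀ t, StandardBorelSpace (𝓦 t)]
    (𝓢 : Fin k → Type*) [∀ j, MeasurableSpace (𝓢 j)] [∀ j, StandardBorelSpace (𝓢 j)]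
    (X : ∀ t j, Ω → 𝓧 t j) (hX : ∀ t j, Measurable (X t j))
    (W : ∀ t, Ω → 𝓦 t) (hW : ∀ t, Measurable (W t))
    (L : Fin T → Ω → 𝓛) (hL : ∀ t, Measurable (L t))
    (G : Fin T → MeasurableSpace Ω)
    (hG : ∀ t, G t =
      (⨆ s : Fin T, ⨆ _ : s < t, ⨆ j : Fin k,
          MeasurableSpace.comap (X s j) inferInstance) ⊔
      (⨆ s : Fin T, ⨆ _ : s ≤ t, MeasurableSpace.comap (L s) inferInstance))
    (σ : ∀ j, Ω → 𝓢 j) (hσmeas : ∀ j, Measurable (σ j))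
    (hσconst : ∀ j, ∃ v : 𝓢 j, ∀ᵐ ω ∂μ, σ j ω = v)
    (hKall : ∀ t : Fin T,
      ∃ (f : ∀ j : Fin k, 𝓛 × Set.Icc (0 : ℝ) 1 → 𝓧 t j)
        (h : ∀ j : Fin k, 𝓢 j × Set.Icc (0 : ℝ) 1 → Set.Icc (0 : ℝ) 1)
        (e : Fin k → Ω → Set.Icc (0 : ℝ) 1),
        (∀ j, Measurable (f j)) ∧ (∀ j, Measurable (h j)) ∧ (∀ j, Measurable (e j)) ∧
        (∀ j, ∀ᵐ ω ∂μ, X t j ω = f j (L t ω, h j (σ j ω, e j ω))) ∧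
        CondIndepRV μ (G t) (fun ω => fun j => e j ω)
          (fun ω => fun s : {s : Fin T // s ≤ t} => W s.1 ω)) :
    ∀ t : Fin T,
      CondIndepRV μ (G t) (fun ω => fun j => X t j ω)
        (fun ω => fun s : {s : Fin T // s ≤ t} => W s.1 ω) := by
  intro t
  -- G t is a sub-σ-algebra of mΩ
  have hGle : G t ≤ mΩ := by
    rw [hG t]
    refine sup_le ?_ ?_
    · exact iSup_le fun s => iSup_le fun _ => iSup_le fun j => (hX s j).comap_le
    · exact iSup_le fun s => iSup_le fun _ => (hL s).comap_le
  -- L t is G t-measurable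
  have hLG : Measurable[G t] (L t) := by
    rw [measurable_iff_comap_le, hG t]
    refine le_trans ?_ le_sup_right
    exact le_iSup_of_le t (le_iSup_of_le le_rfl le_rfl)
  obtain ⟨f, h, e, hf, hh, he, hXrep, hCI⟩ := hKall t
  choose v hv using hσconst
  have hA : Measurable (fun ω => fun j => e j ω) := measurable_pi_lambda _ he
  have hB : Measurable (fun ω => fun s : {s : Fin T // s ≤ t} => W s.1 ω) :=
    measurable_pi_lambda _ fun s => hW s.1
  -- the deterministic map assembling the covariates from (L_t, noises)
  set Φ : 𝓛 × (Fin k → Set.Icc (0 : ℝ) 1) → ∀ j, 𝓧 t j :=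
    fun p => fun j => f j (p.1, h j (v j, p.2 j)) with hΦdef
  have hΦ : Measurable Φ :=
    measurable_pi_lambda _ fun j => (hf j).comp
      (measurable_fst.prodMk ((hh j).comp
        (measurable_const.prodMk ((measurable_pi_apply j).comp measurable_snd))))
  have hPair : CondIndepRV μ (G t) (fun ω => (L t ω, fun j => e j ω))
      (fun ω => fun s : {s : Fin T // s ≤ t} => W s.1 ω) :=
    myProdLeft hGle hA hB hLG hCI
  have hComp : CondIndepRV μ (G t) (fun ω => Φ (L t ω, fun j => e j ω))
      (fun ω => fun s : {s : Fin T // s ≤ t} => W s.1 ω) :=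
    myCompLeft hPair hΦ
  refine myCongr ?_ hComp
  have h1 : ∀ᵐ ω ∂μ, ∀ j, X t j ω = f j (L t ω, h j (σ j ω, e j ω)) := ae_all_iff.mpr hXrep
  have h2 : ∀ᵐ ω ∂μ, ∀ j, σ j ω = v j := ae_all_iff.mpr hv
  filter_upwards [h1, h2] with ω hω1 hω2
  funext j
  simp only [Φ]
  rw [← hω2 j, ← hω1 j]
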